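/- There exists an absolute constant c > 0 (independent of all parameters) such that for all positive integers n, m, d, M, B_N with 1 ≤ B_N ≤ n, M ≥ d + 2, and B_N ≥ M/(4(d+2)), one has ⌈n/B_N⌉ · (B_N·d + m·d + m + B_N) ≤ c · (n·d + m·d + n·m·d²/M). In particular, the total HBM access count of the streaming f̂-update kernel, which loads each row block of size B_N once (cost B_N·d), streams all of K and the bias across each of the ⌈n/B_N⌉ row-block passes (cost m·d + m per pass), and writes each output block once (cost B_N), is O(n·d + m·d + n·m·d²/M). -/

import Mathlib

/-- IO complexity of the streaming `f̂`-update kernel: there is an absolute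
constant `c > 0` such that for all positive `n, m, d, M, B_N` with
`B_N ≤ n`, `M ≥ d + 2` and `B_N ≥ M/(4(d+2))`, the total HBM access count
`⌈n/B_N⌉·(B_N·d + m·d + m + B_N)` is at most
`c·(n·d + m·d + n·m·d²/M)`. -/
theorem flash_sinkhorn_io_bound :
    ∃ c : ℝ, 0 < c ∧
      ∀ n m d M B_N : ℕ,
        1 ≤ n → 1 ≤ m → 1 ≤ d → 1 ≤ B_N → B_N ≤ n → d + 2 ≤ M →
        (M : ℝ) / (4 * ((d : ℝ) + 2)) ≤ (B_N : ℝ) →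
        (⌈(n : ℝ) / (B_N : ℝ)⌉ : ℝ)
            * ((B_N : ℝ) * d + (m : ℝ) * d + m + B_N)
          ≤ c * ((n : ℝ) * d + (m : ℝ) * d
                  + (n : ℝ) * m * (d : ℝ) ^ 2 / M) := by
  refine ⟨48, by norm_num, ?_⟩
  intro n m d M B_N hn hm hd hB hBn hdM hMB
  have hn' : (1 : ℝ) ≤ n := by exact_mod_cast hn
  have hm' : (1 : ℝ) ≤ m := by exact_mod_cast hm
  have hd' : (1 : ℝ) ≤ d := by exact_mod_cast hd
  have hB' : (1 : ℝ) ≤ B_N := by exact_mod_cast hB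
  have hBn' : (B_N : ℝ) ≤ n := by exact_mod_cast hBn
  have hM' : (1 : ℝ) ≤ M := by
    have h : ((d:ℝ) + 2) ≤ M := by exact_mod_cast hdM
    linarith
  have hBpos : (0 : ℝ) < B_N := by linarith
  have hMpos : (0 : ℝ) < M := by linarith
  set C : ℝ := (⌈(n : ℝ) / (B_N : ℝ)⌉ : ℝ) with hC
  have hC0 : (0 : ℝ) ≤ C := by
    have : (0:ℝ) ≤ (n:ℝ)/(B_N:ℝ) := by positivity
    have := Int.le_ceil ((n:ℝ)/(B_N:ℝ))
    linarith
  -- ceil bound: C * B_N ≤ 2 n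
  have hCB : C * B_N ≤ 2 * n := by
    have h1 : C ≤ (n : ℝ) / B_N + 1 := by
      have := (Int.ceil_lt_add_one ((n:ℝ)/(B_N:ℝ))).le
      linarith
    have h2 : (1 : ℝ) ≤ (n : ℝ) / B_N := (one_le_div hBpos).mpr hBn'
    have h3 : C ≤ 2 * ((n : ℝ) / B_N) := by linarith
    have := mul_le_mul_of_nonneg_right h3 hBpos.le
    calc C * B_N ≤ 2 * ((n : ℝ) / B_N) * B_N := this
      _ = 2 * n := by field_simp
  -- memory bound: M ≤ 12 * d * B_N
  have hM12 : (M : ℝ) ≤ 12 * d * B_N := by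
    have h4 : (M : ℝ) ≤ 4 * ((d : ℝ) + 2) * B_N := by
      have := mul_le_mul_of_nonneg_left hMB (by positivity : (0:ℝ) ≤ 4 * ((d:ℝ)+2))
      have hne : (4 : ℝ) * ((d:ℝ)+2) ≠ 0 := by positivity
      calc (M:ℝ) = 4 * ((d:ℝ)+2) * ((M:ℝ) / (4 * ((d:ℝ)+2))) := by field_simp
        _ ≤ 4 * ((d:ℝ)+2) * B_N := this
    nlinarith
  have hgoal : C * ((B_N : ℝ) * d + (m : ℝ) * d + m + B_N) * M
      ≤ 48 * ((n : ℝ) * d + (m : ℝ) * d + (n : ℝ) * m * (d : ℝ) ^ 2 / M) * M := by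
    have hrhs : 48 * ((n : ℝ) * d + (m : ℝ) * d + (n : ℝ) * m * (d : ℝ) ^ 2 / M) * M
        = 48 * ((n:ℝ)*d*M + (m:ℝ)*d*M + (n:ℝ)*m*(d:ℝ)^2) := by
      field_simp
    rw [hrhs]
    have hdM0 : (0:ℝ) ≤ (d:ℝ) * M := by positivity
    have t1 : C * (B_N:ℝ) * ((d:ℝ) * M) ≤ 2 * n * ((d:ℝ) * M) :=
      mul_le_mul_of_nonneg_right hCB hdM0
    have e1 : C * m * d * (M:ℝ) ≤ C * m * d * (12 * d * B_N) :=
      mul_le_mul_of_nonneg_left hM12 (by positivity)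
    have e2 : 12 * (m:ℝ) * d * d * (C * B_N) ≤ 12 * (m:ℝ) * d * d * (2 * n) :=
      mul_le_mul_of_nonneg_left hCB (by positivity)
    have e3 : C * m * (M:ℝ) ≤ C * m * (12 * d * B_N) :=
      mul_le_mul_of_nonneg_left hM12 (by positivity)
    have e4 : 12 * (m:ℝ) * d * (C * B_N) ≤ 12 * (m:ℝ) * d * (2 * n) :=
      mul_le_mul_of_nonneg_left hCB (by positivity)
    have e5 : 24 * (n:ℝ) * m * d * 1 ≤ 24 * (n:ℝ) * m * d * d :=
      mul_le_mul_of_nonneg_left hd' (by positivity)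
    have t4 : C * (B_N:ℝ) * M ≤ 2 * n * M :=
      mul_le_mul_of_nonneg_right hCB hMpos.le
    have e6 : 2 * (n:ℝ) * M * 1 ≤ 2 * (n:ℝ) * M * d :=
      mul_le_mul_of_nonneg_left hd' (by positivity)
    have hnm : (0:ℝ) ≤ (n:ℝ) * d * M := by positivity
    have hmm : (0:ℝ) ≤ (m:ℝ) * d * M := by positivity
    nlinarith [t1, e1, e2, e3, e4, e5, t4, e6, hnm, hmm]
  exact le_of_mul_le_mul_right hgoal hMpos
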